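/- Let S be a nonempty subset of ℝⁿ, let f : ℝⁿ → ℝ ∪ {∞} be an extended real-valued function with f_* := inf_{x ∈ S} f(x) finite, and let ψ : ℝⁿ → ℝ be a residual function of S. Assume there exists a constant c_* > 0 such that c_*·ψ(x) ≥ [f_* − f(x)]_+ for all x ∈ ℝⁿ. Then for every c > c_*, the set of minimizers of f over S coincides with the set of minimizers of f + c·ψ over ℝⁿ; that is, { x ∈ S : f(x) = f_* } = { x ∈ ℝⁿ : f(x) + c·ψ(x) = inf_{x' ∈ ℝⁿ} ( f(x') + c·ψ(x') ) }. -/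

import Mathlib

/-- Theorem 3.1, argmin conclusion: if there is `c_* > 0` with
`c_* ψ(x) ≥ [f_* - f(x)]₊` for all `x`, then for every `c > c_*` the
minimizers of `f` over `S` coincide with the minimizers of `f + c ψ` over `ℝⁿ`. -/
theorem stmt_2 {n : ℕ} (S : Set (EuclideanSpace ℝ (Fin n))) (hS : S.Nonempty)
    (f : EuclideanSpace ℝ (Fin n) → EReal) (hf : ∀ x, f x ≠ ⊥)
    (fstar : ℝ) (hfstar : (fstar : EReal) = ⨅ x ∈ S, f x)
    (ψ : EuclideanSpace ℝ (Fin n) → ℝ)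
    (hψ0 : ∀ x, 0 ≤ ψ x) (hψS : ∀ x, ψ x = 0 ↔ x ∈ S)
    (cstar : ℝ) (hcstar : 0 < cstar)
    (hpen : ∀ x, max ((fstar : EReal) - f x) 0 ≤ ((cstar * ψ x : ℝ) : EReal)) :
    ∀ c : ℝ, cstar < c →
      {x | x ∈ S ∧ f x = (fstar : EReal)} =
        {x | f x + ((c * ψ x : ℝ) : EReal) =
              ⨅ x', f x' + ((c * ψ x' : ℝ) : EReal)} := by
  intro c hc
  have hc0 : (0:ℝ) < c := hcstar.trans hc
  -- key inequality: fstar ≤ f x + c ψ x for all x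
  have key : ∀ x, (fstar : EReal) ≤ f x + ((c * ψ x : ℝ) : EReal) := by
    intro x
    rcases le_or_gt (fstar : EReal) (f x) with h | h
    · have h0 : (0:EReal) ≤ ((c * ψ x : ℝ) : EReal) := by
        exact_mod_cast mul_nonneg hc0.le (hψ0 x)
      calc (fstar:EReal) ≤ f x := h
        _ = f x + 0 := (add_zero _).symm
        _ ≤ f x + ((c * ψ x : ℝ) : EReal) := add_le_add_right h0 _
    · have hne : f x ≠ ⊤ := by
        intro ht; rw [ht] at h; exact absurd h (by simp)
      have hr : ((f x).toReal : EReal) = f x := EReal.coe_toReal hne (hf x)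
      set r := (f x).toReal with hrdef
      have hpen' : (fstar : EReal) - f x ≤ ((cstar * ψ x : ℝ) : EReal) :=
        le_trans (le_max_left _ _) (hpen x)
      rw [← hr] at hpen' ⊢
      have hpenR : fstar - r ≤ cstar * ψ x := by
        rw [← EReal.coe_sub] at hpen'
        exact_mod_cast hpen'
      have : fstar ≤ r + c * ψ x := by
        have : cstar * ψ x ≤ c * ψ x := mul_le_mul_of_nonneg_right hc.le (hψ0 x)
        linarith
      rw [← EReal.coe_add]
      exact_mod_cast this
  -- infimum equals fstar
  have hinf : (⨅ x', f x' + ((c * ψ x' : ℝ) : EReal)) = (fstar : EReal) := by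
    apply le_antisymm
    · rw [hfstar]
      refine le_iInf₂ fun x hx => ?_
      have hx0 : ψ x = 0 := (hψS x).mpr hx
      have : f x + ((c * ψ x : ℝ) : EReal) = f x := by
        rw [hx0, mul_zero]; simp
      exact (iInf_le _ x).trans this.le
    · exact le_iInf key
  ext x
  simp only [Set.mem_setOf_eq, hinf]
  constructor
  · rintro ⟨hxS, hfx⟩
    have hx0 : ψ x = 0 := (hψS x).mpr hxS
    rw [hx0, mul_zero, hfx]; simp
  · intro hx
    have hψ0x : ψ x = 0 := by
      by_contra hne
      have hpos : 0 < ψ x := lt_of_le_of_ne (hψ0 x) (Ne.symm hne)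
      rcases le_or_gt (fstar : EReal) (f x) with h | h
      · have : (fstar:EReal) < f x + ((c * ψ x : ℝ) : EReal) := by
          rcases eq_or_ne (f x) ⊤ with ht | ht
          · rw [ht, EReal.top_add_of_ne_bot (EReal.coe_ne_bot _)]
            exact EReal.coe_lt_top _
          · have hr : ((f x).toReal : EReal) = f x := EReal.coe_toReal ht (hf x)
            have hfr : fstar ≤ (f x).toReal := by
              rw [← hr] at h; exact_mod_cast h
            rw [← hr, ← EReal.coe_add]
            have : fstar < (f x).toReal + c * ψ x := by
              have := mul_pos hc0 hpos; linarith
            exact_mod_cast this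
        exact absurd hx this.ne'
      · have hne' : f x ≠ ⊤ := by
          intro ht; rw [ht] at h; exact absurd h (by simp)
        have hr : ((f x).toReal : EReal) = f x := EReal.coe_toReal hne' (hf x)
        set r := (f x).toReal with hrdef
        have hpen' : (fstar : EReal) - f x ≤ ((cstar * ψ x : ℝ) : EReal) :=
          le_trans (le_max_left _ _) (hpen x)
        rw [← hr] at hpen'
        have hpenR : fstar - r ≤ cstar * ψ x := by
          rw [← EReal.coe_sub] at hpen'
          exact_mod_cast hpen'
        have hlt : fstar < r + c * ψ x := by
          have : cstar * ψ x < c * ψ x := mul_lt_mul_of_pos_right hc hpos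
          linarith
        have : (fstar:EReal) < f x + ((c * ψ x : ℝ) : EReal) := by
          rw [← hr, ← EReal.coe_add]; exact_mod_cast hlt
        exact absurd hx this.ne'
    have hfx : f x = (fstar : EReal) := by
      rw [hψ0x, mul_zero] at hx; simpa using hx
    exact ⟨(hψS x).mp hψ0x, hfx⟩
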